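/- In the two-agent model with the OR (1-out-of-2) fusion rule, the Bayes risk of any sequential strategy (ρ₁, ρ₂), where ρ₂ : {0,1} → ℝ gives the second agent's threshold as a function of the first agent's decision, equals c₁₀·p₀·( a(ρ₁) + (1 − a(ρ₁))·a(ρ₂(0)) ) + c₀₁·p₁·b(ρ₁)·b(ρ₂(0)), which is exactly the Bayes risk of the parallel strategy with thresholds (ρ₁, ρ₂(0)). In particular, the Bayes risk does not depend on ρ₂(1), and the infimum of the Bayes risk over all sequential strategies equals the infimum over all parallel strategies. -/

import Mathlib

/-!
Two-agent team decision making with the OR (1-out-of-2) fusion rule.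

Hypothesis `H ∈ {0,1}` has prior `P(H=0) = p0 ∈ (0,1)`.  Given `H = h`, the
private signals `Y₁, Y₂` are i.i.d. with Borel probability law `μh` on `ℝ`.
For a threshold `t`, `typeI μ0 t = μ0((t,∞))` and `typeII μ1 t = μ1((−∞,t])`.
A sequential strategy is a pair `(ρ1, ρ2)` with `ρ2 : Bool → ℝ`; the local
decisions are `Ĥ₁ = 1{Y₁ > ρ1}` and `Ĥ₂ = 1{Y₂ > ρ2 Ĥ₁}`, and the OR-fusion
global decision is `Ĥ₁ ∨ Ĥ₂`.  A parallel strategy uses fixed thresholds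
`(lam1, lam2)` (the second agent ignores the first agent's decision).
-/

open MeasureTheory

noncomputable section

/-- Type I error probability of the threshold test `1{Y > t}` when `Y ∼ μ0`. -/
def typeI (μ0 : Measure ℝ) (t : ℝ) : ℝ := (μ0 (Set.Ioi t)).toReal

/-- Type II error probability of the threshold test `1{Y > t}` when `Y ∼ μ1`. -/
def typeII (μ1 : Measure ℝ) (t : ℝ) : ℝ := (μ1 (Set.Iic t)).toReal

/-- The event (set of signal pairs) on which the OR-fused global decision of the
sequential strategy `(ρ1, ρ2)` is `1`:  `Ĥ₁ ∨ Ĥ₂ = 1`, where `Ĥ₁ = 1{y₁ > ρ1}`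
and `Ĥ₂ = 1{y₂ > ρ2 Ĥ₁}`. -/
def seqGlobalOneOR (ρ1 : ℝ) (ρ2 : Bool → ℝ) : Set (ℝ × ℝ) :=
  {y | ρ1 < y.1 ∨ ρ2 (decide (ρ1 < y.1)) < y.2}

/-- Bayes risk of the sequential strategy `(ρ1, ρ2)` under the OR fusion rule:
`c10·p0·P(Ĥ=1 | H=0) + c01·p1·P(Ĥ=0 | H=1)`, where conditionally on `H = h`
the signals are i.i.d. `μh ⊗ μh`. -/
def seqRiskOR (μ0 μ1 : Measure ℝ) (p0 c10 c01 : ℝ) (ρ1 : ℝ) (ρ2 : Bool → ℝ) : ℝ :=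
  c10 * p0 * ((μ0.prod μ0) (seqGlobalOneOR ρ1 ρ2)).toReal
    + c01 * (1 - p0) * ((μ1.prod μ1) (seqGlobalOneOR ρ1 ρ2)ᶜ).toReal

/-- Bayes risk of the parallel strategy `(lam1, lam2)` under the OR fusion rule. -/
def parRiskOR (μ0 μ1 : Measure ℝ) (p0 c10 c01 : ℝ) (lam1 lam2 : ℝ) : ℝ :=
  seqRiskOR μ0 μ1 p0 c10 c01 lam1 (fun _ => lam2)

lemma seqSet_eq_union (ρ1 : ℝ) (ρ2 : Bool → ℝ) :
    seqGlobalOneOR ρ1 ρ2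
      = (Set.Ioi ρ1 ×ˢ (Set.univ : Set ℝ)) ∪ (Set.Iic ρ1 ×ˢ Set.Ioi (ρ2 false)) := by
  ext ⟨y1, y2⟩
  by_cases h : ρ1 < y1 <;>
    simp [seqGlobalOneOR, h, not_lt.mp, le_of_not_gt]

lemma seqSet_compl (ρ1 : ℝ) (ρ2 : Bool → ℝ) :
    (seqGlobalOneOR ρ1 ρ2)ᶜ = Set.Iic ρ1 ×ˢ Set.Iic (ρ2 false) := by
  ext ⟨y1, y2⟩
  by_cases h : ρ1 < y1 <;>
    simp [seqGlobalOneOR, h, not_lt.mp, le_of_not_gt, not_lt]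

lemma seqSet_depends (ρ1 : ℝ) (ρ2 ρ2' : Bool → ℝ) (h : ρ2 false = ρ2' false) :
    seqGlobalOneOR ρ1 ρ2 = seqGlobalOneOR ρ1 ρ2' := by
  rw [seqSet_eq_union, seqSet_eq_union, h]

lemma prod_seqSet (μ : Measure ℝ) [IsProbabilityMeasure μ] (ρ1 : ℝ) (ρ2 : Bool → ℝ) :
    ((μ.prod μ) (seqGlobalOneOR ρ1 ρ2)).toReal
      = typeI μ ρ1 + (1 - typeI μ ρ1) * typeI μ (ρ2 false) := by
  rw [seqSet_eq_union]
  have hd : Disjoint (Set.Ioi ρ1 ×ˢ (Set.univ : Set ℝ)) (Set.Iic ρ1 ×ˢ Set.Ioi (ρ2 false)) := by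
    refine Set.disjoint_left.2 ?_
    rintro ⟨y1, y2⟩ h1 h2
    exact absurd h2.1 (show ¬ (y1 ≤ ρ1) from not_le.2 h1.1)
  rw [measure_union hd ((measurableSet_Iic.prod measurableSet_Ioi))]
  rw [Measure.prod_prod, Measure.prod_prod, measure_univ, mul_one]
  have hIic : μ (Set.Iic ρ1) = 1 - μ (Set.Ioi ρ1) := by
    rw [← Set.compl_Ioi, measure_compl measurableSet_Ioi (measure_ne_top μ _), measure_univ]
  rw [hIic]
  have h1 : μ (Set.Ioi ρ1) ≠ ⊤ := measure_ne_top μ _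
  have h2 : μ (Set.Ioi (ρ2 false)) ≠ ⊤ := measure_ne_top μ _
  have hle : μ (Set.Ioi ρ1) ≤ 1 := prob_le_one
  rw [ENNReal.toReal_add h1 (ENNReal.mul_ne_top (by simp [ENNReal.sub_ne_top]) h2),
    ENNReal.toReal_mul, ENNReal.toReal_sub_of_le hle (by simp)]
  simp [typeI]

lemma prod_seqSet_compl (μ : Measure ℝ) [IsProbabilityMeasure μ] (ρ1 : ℝ) (ρ2 : Bool → ℝ) :
    ((μ.prod μ) (seqGlobalOneOR ρ1 ρ2)ᶜ).toReal
      = typeII μ ρ1 * typeII μ (ρ2 false) := by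
  rw [seqSet_compl, Measure.prod_prod, ENNReal.toReal_mul]; rfl

lemma seqRisk_eq (μ0 μ1 : Measure ℝ) [IsProbabilityMeasure μ0] [IsProbabilityMeasure μ1]
    (p0 c10 c01 : ℝ) (ρ1 : ℝ) (ρ2 : Bool → ℝ) :
    seqRiskOR μ0 μ1 p0 c10 c01 ρ1 ρ2
      = c10 * p0 * (typeI μ0 ρ1 + (1 - typeI μ0 ρ1) * typeI μ0 (ρ2 false))
        + c01 * (1 - p0) * (typeII μ1 ρ1 * typeII μ1 (ρ2 false)) := by
  rw [seqRiskOR, prod_seqSet, prod_seqSet_compl]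

/-- In the two-agent model with the OR (1-out-of-2) fusion rule, the Bayes risk of
any sequential strategy `(ρ1, ρ2)` equals
`c10·p0·(a(ρ1) + (1 − a(ρ1))·a(ρ2 0)) + c01·p1·b(ρ1)·b(ρ2 0)`,
which is exactly the Bayes risk of the parallel strategy `(ρ1, ρ2 0)`.
In particular the Bayes risk does not depend on `ρ2 1`, and the infimum of the
Bayes risk over all sequential strategies equals the infimum over all parallel
strategies. -/
theorem two_agent_or_sequential_equals_parallel
    (μ0 μ1 : Measure ℝ) [IsProbabilityMeasure μ0] [IsProbabilityMeasure μ1]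
    (p0 c10 c01 : ℝ) (hp0 : p0 ∈ Set.Ioo (0 : ℝ) 1) (hc10 : 0 < c10) (hc01 : 0 < c01) :
    (∀ (ρ1 : ℝ) (ρ2 : Bool → ℝ),
      seqRiskOR μ0 μ1 p0 c10 c01 ρ1 ρ2
          = c10 * p0 * (typeI μ0 ρ1 + (1 - typeI μ0 ρ1) * typeI μ0 (ρ2 false))
            + c01 * (1 - p0) * (typeII μ1 ρ1 * typeII μ1 (ρ2 false))
        ∧ seqRiskOR μ0 μ1 p0 c10 c01 ρ1 ρ2 = parRiskOR μ0 μ1 p0 c10 c01 ρ1 (ρ2 false))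
    ∧ (∀ (ρ1 : ℝ) (ρ2 ρ2' : Bool → ℝ), ρ2 false = ρ2' false →
        seqRiskOR μ0 μ1 p0 c10 c01 ρ1 ρ2 = seqRiskOR μ0 μ1 p0 c10 c01 ρ1 ρ2')
    ∧ sInf {r : ℝ | ∃ (ρ1 : ℝ) (ρ2 : Bool → ℝ), r = seqRiskOR μ0 μ1 p0 c10 c01 ρ1 ρ2}
        = sInf {r : ℝ | ∃ (lam1 lam2 : ℝ), r = parRiskOR μ0 μ1 p0 c10 c01 lam1 lam2} := by
  have hdep : ∀ (ρ1 : ℝ) (ρ2 ρ2' : Bool → ℝ), ρ2 false = ρ2' false →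
      seqRiskOR μ0 μ1 p0 c10 c01 ρ1 ρ2 = seqRiskOR μ0 μ1 p0 c10 c01 ρ1 ρ2' := by
    intro ρ1 ρ2 ρ2' h
    simp only [seqRiskOR, seqSet_depends ρ1 ρ2 ρ2' h]
  refine ⟨fun ρ1 ρ2 => ⟨seqRisk_eq μ0 μ1 p0 c10 c01 ρ1 ρ2, hdep ρ1 ρ2 _ rfl⟩, hdep, ?_⟩
  congr 1
  ext r
  constructor
  · rintro ⟨ρ1, ρ2, rfl⟩
    exact ⟨ρ1, ρ2 false, hdep ρ1 ρ2 _ rfl⟩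
  · rintro ⟨lam1, lam2, rfl⟩
    exact ⟨lam1, fun _ => lam2, rfl⟩

end
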